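/- Let q₁, …, q_t be distinct primes and η₁, …, η_t ≥ 2. The set of products {∏_{k=1}^t q_k^(ε_k/η_k) : 0 ≤ ε_k ≤ η_k − 1} is linearly independent over ℚ (as real numbers); in particular it is a ℚ-basis of ℚ(q₁^(1/η₁), …, q_t^(1/η_t)). -/

import Mathlib

open Polynomial IntermediateField

theorem pos_X_pow_sub_C_irreducible {K : Type u} [Field K] [LinearOrder K] [IsStrictOrderedRing K]
    {d : ℕ} (hd : d ≠ 0) {c : K} (hc : 0 < c)
    (H : ∀ ℓ : ℕ, ℓ.Prime → ℓ ∣ d → ∀ b : K, b ^ ℓ ≠ c) :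
    Irreducible (X ^ d - C c) := by
  induction d using induction_on_primes with
  | zero => exact absurd rfl hd
  | one => simpa using irreducible_X_sub_C c
  | prime_mul p a hp IH =>
    have ha : a ≠ 0 := fun h => hd (by simp [h])
    have hm : Irreducible (X ^ a - C c) :=
      IH ha (fun ℓ hℓ hdvd b => H ℓ hℓ (hdvd.mul_left p) b)
    apply X_pow_mul_sub_C_irreducible hm
    intro E _ _ x hx
    have hint : IsIntegral K x := not_not.mp fun h ↦ by
      simpa only [degree_zero, degree_X_pow_sub_C (Nat.pos_of_ne_zero ha),
        WithBot.natCast_ne_bot] using congr_arg degree (hx.symm.trans (dif_neg h))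
    apply X_pow_sub_C_irreducible_of_prime hp
    intro b hb
    have hnorm : (Algebra.norm K) b ^ p = (-1) ^ a * -c := by
      rw [← map_pow, hb, ← adjoin.powerBasis_gen hint,
        Algebra.PowerBasis.norm_gen_eq_coeff_zero_minpoly]
      simp [minpoly_gen, hx, ha]
      rw [if_neg (fun h => ha h.symm)]; ring
    rcases hp.eq_two_or_odd' with h2 | hodd
    · subst h2
      rcases Nat.even_or_odd a with he | ho
      · have h2 : (Algebra.norm K) b ^ 2 = -c := by rw [hnorm, he.neg_one_pow]; ring
        nlinarith [sq_nonneg ((Algebra.norm K) b)]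
      · refine H 2 hp ⟨a, rfl⟩ ((Algebra.norm K) b) ?_
        rw [hnorm, ho.neg_one_pow]; ring
    · refine H p hp (dvd_mul_right p a) ((-1) ^ (a + 1) * (Algebra.norm K) b) ?_
      rcases Nat.even_or_odd a with he | ho
      · rw [mul_pow, hnorm, he.neg_one_pow, he.add_one.neg_one_pow, hodd.neg_one_pow]; ring
      · rw [mul_pow, hnorm, ho.neg_one_pow, ho.add_one.neg_one_pow]; ring

theorem minpoly_real_pos_pow_rat {u : ℝ} (hu : 0 < u) {d : ℕ} (hd : 0 < d) {c : ℚ}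
    (hud : u ^ d = (c : ℝ))
    (hmin : ∀ e : ℕ, 0 < e → e < d → ∀ s : ℚ, u ^ e ≠ (s : ℝ)) :
    minpoly ℚ u = X ^ d - C c := by
  have hc : 0 < c := by
    have : (0:ℝ) < (c:ℝ) := hud ▸ pow_pos hu d
    exact_mod_cast this
  have H : ∀ ℓ : ℕ, ℓ.Prime → ℓ ∣ d → ∀ b : ℚ, b ^ ℓ ≠ c := by
    rintro ℓ hℓ ⟨e, rfl⟩ b hb
    have he' : 0 < e := by
      rcases Nat.eq_zero_or_pos e with h | h
      · simp [h] at hd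
      · exact h
    have hlt : e < ℓ * e := by
      have h2 := hℓ.two_le
      calc e = 1 * e := (one_mul e).symm
        _ < ℓ * e := (Nat.mul_lt_mul_right he').mpr (by omega)
    refine hmin e he' hlt |b| ?_
    have hbc : |b| ^ ℓ = c := by rw [← abs_pow, hb, abs_of_pos hc]
    have h1 : (u ^ e) ^ ℓ = ((|b| : ℚ) : ℝ) ^ ℓ := by
      rw [← pow_mul, mul_comm e ℓ, hud]
      exact_mod_cast congrArg (fun y : ℚ => (y : ℝ)) hbc.symm
    have h2 : (0:ℝ) ≤ u ^ e := (pow_pos hu e).le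
    have h3 : (0:ℝ) ≤ ((|b| : ℚ) : ℝ) := by positivity
    exact pow_left_strictMonoOn₀ (n := ℓ) hℓ.ne_zero |>.injOn h2 h3 h1
  have hirr := pos_X_pow_sub_C_irreducible hd.ne' hc H
  have haev : (Polynomial.aeval u) (X ^ d - C c) = 0 := by
    simp [hud]
  exact (minpoly.eq_of_irreducible_of_monic hirr haev (monic_X_pow_sub_C c hd.ne')).symm

theorem trace_eq_zero_of_pow_rat {L : IntermediateField ℚ ℝ} [FiniteDimensional ℚ L]
    (u : L) (hu : 0 < (u : ℝ)) {N : ℕ} (hN : 0 < N) {s : ℚ} (hs : (u : ℝ) ^ N = (s : ℝ))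
    (hirr : ∀ r : ℚ, (u : ℝ) ≠ (r : ℝ)) :
    Algebra.trace ℚ L u = 0 := by
  classical
  have hP : ∃ n, 0 < n ∧ ∃ s : ℚ, (u:ℝ) ^ n = (s:ℝ) := ⟨N, hN, s, hs⟩
  obtain ⟨hd0, c, hc⟩ := Nat.find_spec hP
  set d := Nat.find hP with hdd
  have hmin : ∀ e, 0 < e → e < d → ∀ r : ℚ, (u:ℝ)^e ≠ (r:ℝ) := fun e he hlt r hr =>
    Nat.find_min hP hlt ⟨he, r, hr⟩
  have hminpoly : minpoly ℚ (u : ℝ) = X ^ d - C c := minpoly_real_pos_pow_rat hu hd0 hc hmin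
  have hd2 : 2 ≤ d := by
    by_contra h
    have hd1 : d = 1 := by omega
    exact hirr c (by rw [← hc, hd1, pow_one])
  have hmu : minpoly ℚ u = X ^ d - C c := by
    rw [← minpoly.algebraMap_eq (algebraMap L ℝ).injective u]
    exact hminpoly
  have hnext : (minpoly ℚ u).nextCoeff = 0 := by
    rw [hmu]
    have hnd : (X ^ d - C c : ℚ[X]).natDegree = d := natDegree_X_pow_sub_C
    rw [nextCoeff_of_natDegree_pos (by omega : 0 < (X ^ d - C c : ℚ[X]).natDegree), hnd]
    rw [coeff_sub, coeff_X_pow, if_neg (by omega : ¬ (d - 1 = d)), coeff_C,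
      if_neg (by omega : ¬ (d - 1 = 0))]
    ring
  have hint : IsIntegral ℚ u := IsIntegral.of_finite ℚ u
  have hsplit : ((minpoly ℚ u).map (algebraMap ℚ ℂ)).Splits := IsAlgClosed.splits _
  have h := trace_eq_sum_roots (K := ℚ) (L := L) (F := ℂ) hsplit
  have hsum : ((minpoly ℚ u).aroots ℂ).sum = 0 := by
    rw [aroots_def]
    have h' := hsplit.nextCoeff_eq_neg_sum_roots_of_monic ((minpoly.monic hint).map _)
    rw [nextCoeff_map (algebraMap ℚ ℂ).injective, hnext, map_zero] at h'
    exact neg_eq_zero.mp h'.symm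
  rw [hsum, smul_zero] at h
  exact (map_eq_zero_iff _ (algebraMap ℚ ℂ).injective).mp h

lemma factorization_prod_pow {t : ℕ} {q : Fin t → ℕ} (hq : ∀ k, (q k).Prime)
    (hinj : Function.Injective q) (a : Fin t → ℕ) (j : Fin t) :
    (∏ k, q k ^ a k).factorization (q j) = a j := by
  rw [Nat.factorization_prod (fun k _ => pow_ne_zero _ (hq k).pos.ne')]
  rw [Finset.sum_apply']
  rw [Finset.sum_eq_single j]
  · rw [(hq j).factorization_pow, Finsupp.single_eq_same]
  · intro k _ hkj
    rw [(hq k).factorization_pow]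
    exact Finsupp.single_eq_of_ne' (fun h => hkj (hinj h))
  · intro h; exact absurd (Finset.mem_univ j) h

lemma pow_prod_eq_nat {t : ℕ} {q : Fin t → ℕ} (hq : ∀ k, (q k).Prime)
    {η : Fin t → ℕ} (hη0 : ∀ k, 0 < η k) (e : Fin t → ℕ) :
    (∏ k, (q k : ℝ) ^ ((e k : ℝ) / (η k : ℝ))) ^ (∏ k, η k) =
      ((∏ k, q k ^ ((∏ i, η i) / η k * e k) : ℕ) : ℝ) := by
  push_cast
  rw [← Finset.prod_pow]
  refine Finset.prod_congr rfl fun k _ => ?_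
  have hq0 : (0:ℝ) ≤ (q k : ℝ) := Nat.cast_nonneg _
  have hdvd : η k ∣ ∏ i, η i := Finset.dvd_prod_of_mem η (Finset.mem_univ k)
  have hcast : (((∏ i, η i) / η k * e k : ℕ) : ℝ) = (e k : ℝ) / (η k : ℝ) * (∏ i, η i : ℕ) := by
    obtain ⟨m, hm⟩ := hdvd
    rw [hm, Nat.mul_div_cancel_left m (hη0 k)]
    have : ((η k : ℝ)) ≠ 0 := Nat.cast_ne_zero.mpr (hη0 k).ne'
    push_cast
    field_simp
  rw [← Real.rpow_natCast ((q k : ℝ) ^ ((e k : ℝ) / (η k : ℝ))) (∏ i, η i),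
    ← Real.rpow_mul hq0, ← hcast, Real.rpow_natCast]

lemma exponent_eq_of_rat_mul {t : ℕ} {q : Fin t → ℕ} (hq : ∀ k, (q k).Prime)
    (hinj : Function.Injective q) {η : Fin t → ℕ} (hη0 : ∀ k, 0 < η k)
    (ε ε' : ∀ k, Fin (η k)) (s : ℚ)
    (h : (∏ k, (q k : ℝ) ^ ((ε k : ℝ) / (η k : ℝ))) =
      (s : ℝ) * ∏ k, (q k : ℝ) ^ ((ε' k : ℝ) / (η k : ℝ))) :
    ε = ε' := by
  have hq0 : ∀ k, (0:ℝ) < (q k : ℝ) := fun k => by exact_mod_cast (hq k).pos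
  set N := ∏ k, η k with hN
  have hN0 : 0 < N := Finset.prod_pos (fun k _ => hη0 k)
  have hpos : ∀ (δ : ∀ k, Fin (η k)), (0:ℝ) < ∏ k, (q k : ℝ) ^ ((δ k : ℝ) / (η k : ℝ)) :=
    fun δ => Finset.prod_pos fun k _ => Real.rpow_pos_of_pos (hq0 k) _
  -- s is positive
  have hs0 : (0:ℚ) < s := by
    have h1 : (0:ℝ) < (s:ℝ) := by
      have h2 := hpos ε
      rw [h] at h2
      have h3 := hpos ε'
      nlinarith
    exact_mod_cast h1
  -- raise to N-th power
  set a : Fin t → ℕ := fun k => N / η k * (ε k : ℕ) with ha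
  set b : Fin t → ℕ := fun k => N / η k * (ε' k : ℕ) with hb
  have hA := pow_prod_eq_nat hq hη0 (fun k => (ε k : ℕ))
  have hB := pow_prod_eq_nat hq hη0 (fun k => (ε' k : ℕ))
  have hAB : ((∏ k, q k ^ a k : ℕ) : ℝ) = (s:ℝ) ^ N * ((∏ k, q k ^ b k : ℕ) : ℝ) := by
    rw [← hA, ← hB, h, mul_pow]
  have hABQ : ((∏ k, q k ^ a k : ℕ) : ℚ) = s ^ N * ((∏ k, q k ^ b k : ℕ) : ℚ) := by
    have : (((∏ k, q k ^ a k : ℕ) : ℚ) : ℝ) = ((s ^ N * ((∏ k, q k ^ b k : ℕ) : ℚ) : ℚ) : ℝ) := by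
      push_cast
      push_cast at hAB
      exact hAB
    exact_mod_cast this
  -- clear denominators
  -- turn into a ℕ equation
  set n0 : ℕ := s.num.toNat with hn0
  have hnum : (s.num.toNat : ℤ) = s.num := Int.toNat_of_nonneg (Rat.num_pos.mpr hs0).le
  have hn0' : (n0 : ℚ) = s * s.den := by
    have h4 : (s.num : ℚ) = s * s.den := (Rat.mul_den_eq_num s).symm
    rw [hn0, show ((s.num.toNat : ℕ) : ℚ) = ((s.num.toNat : ℤ) : ℚ) by push_cast; ring, hnum, h4]
  have hNat : (∏ k, q k ^ a k) * s.den ^ N = n0 ^ N * ∏ k, q k ^ b k := by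
    have hQ : (((∏ k, q k ^ a k) * s.den ^ N : ℕ) : ℚ) = ((n0 ^ N * ∏ k, q k ^ b k : ℕ) : ℚ) := by
      rw [Nat.cast_mul, Nat.cast_mul, Nat.cast_pow, Nat.cast_pow, hABQ, hn0']
      ring
    exact_mod_cast hQ
  -- compare factorizations at q j
  funext j
  have hAne : (∏ k, q k ^ a k) ≠ 0 := Finset.prod_ne_zero_iff.mpr fun k _ =>
    pow_ne_zero _ (hq k).pos.ne'
  have hBne : (∏ k, q k ^ b k) ≠ 0 := Finset.prod_ne_zero_iff.mpr fun k _ =>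
    pow_ne_zero _ (hq k).pos.ne'
  have hdne : s.den ≠ 0 := s.den_nz
  have hn0ne : n0 ≠ 0 := by
    have h7 : (0:ℚ) < (n0:ℚ) := by
      rw [hn0']
      exact mul_pos hs0 (by exact_mod_cast Nat.pos_of_ne_zero hdne)
    exact_mod_cast h7.ne'
  have hfact := congrArg (fun n => n.factorization (q j)) hNat
  simp only [Nat.factorization_mul hAne (pow_ne_zero _ hdne),
    Nat.factorization_mul (pow_ne_zero _ hn0ne) hBne,
    Nat.factorization_pow, Finsupp.coe_add, Finsupp.coe_smul, Pi.add_apply, Pi.smul_apply,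
    smul_eq_mul] at hfact
  rw [factorization_prod_pow hq hinj a j, factorization_prod_pow hq hinj b j] at hfact
  -- hfact : a j + N * den.factorization = N * n0.factorization + b j
  set Fd := s.den.factorization (q j)
  set Fn := n0.factorization (q j)
  have hMη : N / η j * η j = N := Nat.div_mul_cancel (Finset.dvd_prod_of_mem η (Finset.mem_univ j))
  set M := N / η j with hM
  have hM0 : 0 < M := by
    rcases Nat.eq_zero_or_pos M with h0 | h0
    · rw [h0] at hMη; omega
    · exact h0
  have hfact' : M * ((ε j : ℕ) + η j * Fd) = M * ((η j) * Fn + (ε' j : ℕ)) := by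
    have h5 : a j = M * (ε j : ℕ) := rfl
    have h6 : b j = M * (ε' j : ℕ) := rfl
    calc M * ((ε j : ℕ) + η j * Fd) = a j + (M * η j) * Fd := by rw [h5]; ring
      _ = a j + N * Fd := by rw [hMη]
      _ = N * Fn + b j := hfact
      _ = (M * η j) * Fn + b j := by rw [hMη]
      _ = M * ((η j) * Fn + (ε' j : ℕ)) := by rw [h6]; ring
  have hred : (ε j : ℕ) + η j * Fd = η j * Fn + (ε' j : ℕ) :=
    Nat.eq_of_mul_eq_mul_left hM0 hfact'
  have hmod : (ε j : ℕ) % η j = (ε' j : ℕ) % η j := by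
    have h1 : ((ε j : ℕ) + η j * Fd) % η j = (ε j : ℕ) % η j := Nat.add_mul_mod_self_left _ _ _
    have h2 : ((η j) * Fn + (ε' j : ℕ)) % η j = (ε' j : ℕ) % η j := by
      rw [Nat.add_comm]; exact Nat.add_mul_mod_self_left _ _ _
    rw [← h1, hred, h2]
  have := (ε j).isLt
  have := (ε' j).isLt
  exact Fin.ext (by rwa [Nat.mod_eq_of_lt (ε j).isLt, Nat.mod_eq_of_lt (ε' j).isLt] at hmod)


set_option synthInstance.maxHeartbeats 400000 in
set_option maxHeartbeats 1000000 in
theorem prime_root_products_linearIndependent (t : ℕ) (q : Fin t → ℕ)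
    (hq : ∀ k, (q k).Prime) (hinj : Function.Injective q)
    (η : Fin t → ℕ) (hη : ∀ k, 2 ≤ η k) :
    LinearIndependent ℚ
      (fun ε : (k : Fin t) → Fin (η k) =>
        ∏ k, (q k : ℝ) ^ ((ε k : ℝ) / (η k : ℝ))) ∧
    Submodule.span ℚ
        (Set.range fun ε : (k : Fin t) → Fin (η k) =>
          ∏ k, (q k : ℝ) ^ ((ε k : ℝ) / (η k : ℝ))) =
      Subalgebra.toSubmodule
        (IntermediateField.adjoin ℚ
          (Set.range fun k : Fin t => (q k : ℝ) ^ ((1 : ℝ) / (η k : ℝ)))).toSubalgebra := by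
  have hq0 : ∀ k, (0:ℝ) < (q k : ℝ) := fun k => by exact_mod_cast (hq k).pos
  have hη0 : ∀ k, 0 < η k := fun k => lt_of_lt_of_le two_pos (hη k)
  set g : Fin t → ℝ := fun k => (q k : ℝ) ^ ((1:ℝ) / (η k : ℝ)) with hgdef
  set v : ((k : Fin t) → Fin (η k)) → ℝ :=
    fun ε => ∏ k, (q k : ℝ) ^ ((ε k : ℝ) / (η k : ℝ)) with hvdef
  have hgpow : ∀ (k : Fin t) (n : ℕ), g k ^ n = (q k : ℝ) ^ ((n : ℝ) / (η k : ℝ)) := by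
    intro k n
    rw [hgdef, ← Real.rpow_natCast ((q k : ℝ) ^ ((1:ℝ) / (η k : ℝ))) n,
      ← Real.rpow_mul (hq0 k).le]
    congr 1
    ring
  have hgη : ∀ k, g k ^ (η k) = (q k : ℝ) := by
    intro k
    rw [hgpow]
    rw [div_self (Nat.cast_ne_zero.mpr (hη0 k).ne' : ((η k : ℕ) : ℝ) ≠ 0)]
    exact Real.rpow_one _
  have hvg : ∀ ε : (k : Fin t) → Fin (η k), v ε = ∏ k, g k ^ (ε k : ℕ) :=
    fun ε => Finset.prod_congr rfl fun k _ => (hgpow k (ε k)).symm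
  have hvpos : ∀ ε : (k : Fin t) → Fin (η k), 0 < v ε :=
    fun ε => Finset.prod_pos fun k _ => Real.rpow_pos_of_pos (hq0 k) _
  set L : IntermediateField ℚ ℝ := IntermediateField.adjoin ℚ (Set.range g) with hLdef
  have hgL : ∀ k, g k ∈ L := fun k => IntermediateField.subset_adjoin _ _ ⟨k, rfl⟩
  have hgint : ∀ x ∈ Set.range g, IsIntegral ℚ x := by
    rintro x ⟨k, rfl⟩
    refine ⟨X ^ (η k) - C (q k : ℚ), monic_X_pow_sub_C _ (hη0 k).ne', ?_⟩
    rw [← Polynomial.aeval_def, map_sub, map_pow, aeval_X, aeval_C,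
      map_natCast (algebraMap ℚ ℝ) (q k), hgη k, sub_self]
  haveI : Finite (Set.range g) := (Set.finite_range g).to_subtype
  haveI hLfin : FiniteDimensional ℚ L := IntermediateField.finiteDimensional_adjoin hgint
  have hvL : ∀ ε, v ε ∈ L := by
    intro ε
    rw [hvg]
    exact prod_mem (fun k _ => pow_mem (hgL k) _)
  set V : ((k : Fin t) → Fin (η k)) → L := fun ε => ⟨v ε, hvL ε⟩ with hVdef
  have hVpos : ∀ ε, (0:ℝ) < (V ε : ℝ) := fun ε => hvpos ε
  have hVne : ∀ ε, V ε ≠ 0 := fun ε h => by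
    have h2 := hVpos ε
    rw [h] at h2
    rw [show ((0 : L) : ℝ) = 0 from rfl] at h2
    exact lt_irrefl _ h2
  set N : ℕ := ∏ k, η k with hNdef
  have hN0 : 0 < N := Finset.prod_pos fun k _ => hη0 k
  -- N-th power of ratio is rational
  have hratpow : ∀ ε ε' : (k : Fin t) → Fin (η k), ∃ s : ℚ,
      ((V ε' : ℝ)⁻¹ * (V ε : ℝ)) ^ N = (s : ℝ) := by
    intro ε ε'
    refine ⟨((∏ k, q k ^ (N / η k * (ε k : ℕ)) : ℕ) : ℚ) /
      ((∏ k, q k ^ (N / η k * (ε' k : ℕ)) : ℕ) : ℚ), ?_⟩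
    have hAq := pow_prod_eq_nat hq hη0 (fun k => (ε k : ℕ))
    have hBq := pow_prod_eq_nat hq hη0 (fun k => (ε' k : ℕ))
    have hBne : ((∏ k, q k ^ (N / η k * (ε' k : ℕ)) : ℕ) : ℝ) ≠ 0 := by
      rw [← hBq]
      exact (pow_pos (hvpos ε') N).ne'
    rw [mul_pow, inv_pow]
    push_cast
    rw [show ((V ε : ℝ)) ^ N = ((∏ k, q k ^ (N / η k * (ε k : ℕ)) : ℕ) : ℝ) from hAq,
      show ((V ε' : ℝ)) ^ N = ((∏ k, q k ^ (N / η k * (ε' k : ℕ)) : ℕ) : ℝ) from hBq]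
    push_cast
    field_simp
  -- irrationality of ratios
  have hirr : ∀ ε ε' : (k : Fin t) → Fin (η k), ε ≠ ε' →
      ∀ r : ℚ, ((V ε' : ℝ)⁻¹ * (V ε : ℝ)) ≠ (r : ℝ) := by
    intro ε ε' hne r hr
    apply hne
    refine exponent_eq_of_rat_mul hq hinj hη0 ε ε' r ?_
    have hv' : (V ε' : ℝ) ≠ 0 := (hVpos ε').ne'
    field_simp at hr
    exact hr.trans (mul_comm _ _)
  -- traces
  have htrace : ∀ ε ε' : (k : Fin t) → Fin (η k), ε ≠ ε' →
      Algebra.trace ℚ L ((V ε')⁻¹ * V ε) = 0 := by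
    intro ε ε' hne
    obtain ⟨s, hs⟩ := hratpow ε ε'
    have hco : (((V ε')⁻¹ * V ε : L) : ℝ) = (V ε' : ℝ)⁻¹ * (V ε : ℝ) := by
      push_cast [IntermediateField.coe_inv]
      ring
    refine trace_eq_zero_of_pow_rat _ ?_ hN0 (s := s) ?_ ?_
    · rw [hco]
      exact mul_pos (inv_pos.mpr (hVpos ε')) (hVpos ε)
    · rw [hco]; exact hs
    · rw [hco]; exact hirr ε ε' hne
  constructor
  · -- linear independence
    rw [Fintype.linearIndependent_iff]
    intro gc hgc j
    have hTinj : Function.Injective (L.val.toLinearMap : L →ₗ[ℚ] ℝ) :=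
      L.val.toRingHom.injective
    have hgcL : ∑ ε, gc ε • V ε = 0 := by
      apply hTinj
      rw [map_sum, map_zero]
      simp only [map_smul]
      exact hgc
    have h1 : ∑ ε, gc ε * Algebra.trace ℚ L ((V j)⁻¹ * V ε) = 0 := by
      have h2 : Algebra.trace ℚ L ((V j)⁻¹ * ∑ ε, gc ε • V ε) = 0 := by
        rw [hgcL, mul_zero, map_zero]
      have h3 : (V j)⁻¹ * ∑ ε, gc ε • V ε = ∑ ε, gc ε • ((V j)⁻¹ * V ε) := by
        rw [Finset.mul_sum]
        exact Finset.sum_congr rfl fun ε _ => mul_smul_comm (gc ε) ((V j)⁻¹) (V ε)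
      rw [h3, map_sum] at h2
      simp only [map_smul, smul_eq_mul] at h2
      exact h2
    rw [Finset.sum_eq_single j
      (fun ε _ hne => by rw [htrace ε j hne, mul_zero])
      (fun h => absurd (Finset.mem_univ j) h)] at h1
    rw [inv_mul_cancel₀ (hVne j),
      show (1 : L) = algebraMap ℚ L 1 from (map_one _).symm,
      Algebra.trace_algebraMap, nsmul_eq_mul, mul_one] at h1
    have hfr : 0 < Module.finrank ℚ L := Module.finrank_pos
    have hfrne : ((Module.finrank ℚ L : ℚ)) ≠ 0 := by exact_mod_cast hfr.ne'
    exact (mul_eq_zero.mp h1).resolve_right hfrne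
  · -- span equals the adjoin
    have halg : L.toSubalgebra = Algebra.adjoin ℚ (Set.range g) :=
      IntermediateField.adjoin_toSubalgebra_of_isAlgebraic (fun x hx => (hgint x hx).isAlgebraic)
    have hgen : ∀ ε ε' : (k : Fin t) → Fin (η k),
        v ε * v ε' ∈ Submodule.span ℚ (Set.range v) := by
      intro ε ε'
      set ε'' : (k : Fin t) → Fin (η k) :=
        fun k => ⟨((ε k : ℕ) + (ε' k : ℕ)) % η k, Nat.mod_lt _ (hη0 k)⟩ with hε''
      have hfac : ∀ k : Fin t, g k ^ ((ε k : ℕ)) * g k ^ ((ε' k : ℕ)) =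
          (q k : ℝ) ^ (((ε k : ℕ) + (ε' k : ℕ)) / η k) *
            g k ^ (((ε k : ℕ) + (ε' k : ℕ)) % η k) := by
        intro k
        rw [← pow_add]
        conv_lhs => rw [← Nat.div_add_mod ((ε k : ℕ) + (ε' k : ℕ)) (η k)]
        rw [pow_add, pow_mul, hgη k]
      have hkey : v ε * v ε' =
          ((∏ k, q k ^ (((ε k : ℕ) + (ε' k : ℕ)) / η k) : ℕ) : ℚ) • v ε'' := by
        calc v ε * v ε' = ∏ k, (g k ^ (ε k : ℕ) * g k ^ (ε' k : ℕ)) := by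
              rw [hvg, hvg, ← Finset.prod_mul_distrib]
          _ = ∏ k, ((q k : ℝ) ^ (((ε k : ℕ) + (ε' k : ℕ)) / η k) *
                g k ^ (((ε k : ℕ) + (ε' k : ℕ)) % η k)) :=
              Finset.prod_congr rfl (fun k _ => hfac k)
          _ = ((∏ k, q k ^ (((ε k : ℕ) + (ε' k : ℕ)) / η k) : ℕ) : ℝ) * v ε'' := by
              rw [Finset.prod_mul_distrib, hvg]
              push_cast
              rfl
          _ = ((∏ k, q k ^ (((ε k : ℕ) + (ε' k : ℕ)) / η k) : ℕ) : ℚ) • v ε'' := by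
              rw [Rat.smul_def]
              push_cast
              ring
      rw [hkey]
      exact Submodule.smul_mem _ _ (Submodule.subset_span ⟨ε'', rfl⟩)
    have hone : (1:ℝ) ∈ Submodule.span ℚ (Set.range v) := by
      have hv1 : v (fun k => ⟨0, hη0 k⟩) = 1 := by
        rw [hvg]; simp
      exact hv1 ▸ Submodule.subset_span ⟨_, rfl⟩
    have hclosed : ∀ x ∈ Submodule.span ℚ (Set.range v), ∀ y ∈ Submodule.span ℚ (Set.range v),
        x * y ∈ Submodule.span ℚ (Set.range v) := by
      intro x hx
      induction hx using Submodule.span_induction with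
      | mem a ha =>
        intro y hy
        induction hy using Submodule.span_induction with
        | mem b hb =>
          obtain ⟨ε, rfl⟩ := ha; obtain ⟨ε', rfl⟩ := hb; exact hgen ε ε'
        | zero => rw [mul_zero]; exact Submodule.zero_mem _
        | add y z _ _ h1 h2 => rw [mul_add]; exact Submodule.add_mem _ h1 h2
        | smul c y _ h1 => rw [mul_smul_comm]; exact Submodule.smul_mem _ _ h1
      | zero => intro y hy; rw [zero_mul]; exact Submodule.zero_mem _
      | add a b _ _ h1 h2 => intro y hy; rw [add_mul]; exact Submodule.add_mem _ (h1 y hy) (h2 y hy)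
      | smul c a _ h1 => intro y hy; rw [smul_mul_assoc]; exact Submodule.smul_mem _ _ (h1 y hy)
    let S : Subalgebra ℚ ℝ :=
      { carrier := Submodule.span ℚ (Set.range v)
        mul_mem' := fun hx hy => hclosed _ hx _ hy
        one_mem' := hone
        add_mem' := fun hx hy => Submodule.add_mem _ hx hy
        zero_mem' := Submodule.zero_mem _
        algebraMap_mem' := fun r => by
          rw [Algebra.algebraMap_eq_smul_one]
          exact Submodule.smul_mem _ _ hone }
    have hsub : Set.range g ⊆ S := by
      rintro x ⟨k, rfl⟩
      have hδ : v (fun j => ⟨if j = k then 1 else 0, by have := hη j; split <;> omega⟩) = g k := by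
        rw [hvg]
        rw [Finset.prod_eq_single k]
        · simp
        · intro j _ hjk; simp [hjk]
        · intro h; exact absurd (Finset.mem_univ k) h
      exact hδ ▸ Submodule.subset_span ⟨_, rfl⟩
    refine le_antisymm ?_ ?_
    · rw [Submodule.span_le]
      rintro x ⟨ε, rfl⟩
      exact hvL ε
    · intro x hx
      have hx' : x ∈ Algebra.adjoin ℚ (Set.range g) := by
        rw [← halg]; exact hx
      exact Algebra.adjoin_le hsub hx'
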